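/- Fischer's inequality: for a symmetric positive semidefinite block matrix M with diagonal blocks M11 (of size m×m) and M22 (of size k×k), det(M) ≤ det(M11)·det(M22). -/

import Mathlib

open Matrix

lemma psd_det_nonneg {n : Type*} [Fintype n] [DecidableEq n] {A : Matrix n n ℝ}
    (hA : A.PosSemidef) : 0 ≤ A.det := by
  have h := hA.1.det_eq_prod_eigenvalues
  rw [h]
  exact Finset.prod_nonneg fun i _ => by
    simpa using hA.eigenvalues_nonneg i

lemma one_le_det_one_add {n : Type*} [Fintype n] [DecidableEq n] {Q : Matrix n n ℝ}
    (hQ : Q.PosSemidef) : 1 ≤ (1 + Q).det := by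
  set U : Matrix n n ℝ := (hQ.1.eigenvectorUnitary : Matrix n n ℝ)
  have hU : U * star U = 1 := (Matrix.mem_unitaryGroup_iff).mp hQ.1.eigenvectorUnitary.2
  have hkey : 1 + Q = U * (1 + diagonal (RCLike.ofReal ∘ hQ.1.eigenvalues)) * star U := by
    rw [mul_add, add_mul, mul_one, hU]
    conv_lhs => rw [hQ.1.spectral_theorem, Unitary.conjStarAlgAut_apply]
  have hdetU : U.det * (star U).det = 1 := by
    rw [← det_mul, hU, det_one]
  rw [hkey, det_mul, det_mul]
  have : U.det * ((1 : Matrix n n ℝ) + diagonal (RCLike.ofReal ∘ hQ.1.eigenvalues)).det * (star U).det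
      = ((1 : Matrix n n ℝ) + diagonal (RCLike.ofReal ∘ hQ.1.eigenvalues)).det * (U.det * (star U).det) := by
    ring
  rw [this, hdetU, mul_one]
  have hdiag : (1 : Matrix n n ℝ) + diagonal (RCLike.ofReal ∘ hQ.1.eigenvalues)
      = diagonal (fun i => 1 + hQ.1.eigenvalues i) := by
    rw [← diagonal_one, diagonal_add]
    rfl
  rw [hdiag, det_diagonal]
  calc (1 : ℝ) = ∏ _i : n, (1 : ℝ) := by simp
  _ ≤ ∏ i : n, (1 + hQ.1.eigenvalues i) := by
    refine Finset.prod_le_prod (fun i _ => zero_le_one) fun i _ => ?_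
    have := hQ.eigenvalues_nonneg i
    linarith

open scoped MatrixOrder in
lemma det_le_det_add {n : Type*} [Fintype n] [DecidableEq n] {S P : Matrix n n ℝ}
    (hS : S.PosSemidef) (hP : P.PosSemidef) : S.det ≤ (S + P).det := by
  by_cases hdet : IsUnit S.det
  · set R := CFC.sqrt S with hRdef
    have hR : R.PosSemidef := Matrix.nonneg_iff_posSemidef.mp (CFC.sqrt_nonneg S)
    have hRR : R * R = S := CFC.sqrt_mul_sqrt_self S hS.nonneg
    have hRdet : IsUnit R.det := by
      have : R.det * R.det = S.det := by rw [← det_mul, hRR]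
      exact isUnit_of_mul_isUnit_left (this ▸ hdet)
    have hRinv : R * R⁻¹ = 1 := mul_nonsing_inv R hRdet
    have hRinvR : R⁻¹ * R = 1 := nonsing_inv_mul R hRdet
    set Q := (R⁻¹)ᴴ * P * R⁻¹ with hQdef
    have hQ : Q.PosSemidef := hP.conjTranspose_mul_mul_same R⁻¹
    have hRH : (R⁻¹)ᴴ = R⁻¹ := by
      rw [conjTranspose_nonsing_inv, hR.1.eq]
    have hexp : S + P = R * (1 + Q) * R := by
      rw [hQdef, hRH, mul_add, add_mul, mul_one, hRR, ← mul_assoc, ← mul_assoc,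
        hRinv, one_mul, mul_assoc, hRinvR, mul_one]
    rw [hexp, det_mul, det_mul]
    have h1 : 1 ≤ (1 + Q).det := one_le_det_one_add hQ
    have hRdn : 0 ≤ R.det := psd_det_nonneg hR
    have hSdet : S.det = R.det * R.det := by rw [← det_mul, hRR]
    rw [hSdet]
    calc R.det * R.det = R.det * 1 * R.det := by ring
    _ ≤ R.det * (1 + Q).det * R.det := by nlinarith
  · have h0 : S.det = 0 := by
      by_contra h
      exact hdet (isUnit_iff_ne_zero.mpr h)
    rw [h0]
    exact psd_det_nonneg (hS.add hP)

lemma posDef_of_psd_isUnit_det {n : Type*} [Fintype n] [DecidableEq n] {A : Matrix n n ℝ}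
    (hA : A.PosSemidef) (h : IsUnit A.det) : A.PosDef := by
  exact hA.posDef_iff_isUnit.mpr ((isUnit_iff_isUnit_det A).mpr h)

theorem stmt_1 {m k : ℕ} (M : Matrix (Fin m ⊕ Fin k) (Fin m ⊕ Fin k) ℝ)
    (hM : M.PosSemidef) :
    M.det ≤ (M.toBlocks₁₁).det * (M.toBlocks₂₂).det := by
  set A := M.toBlocks₁₁ with hAdef
  set B := M.toBlocks₁₂ with hBdef
  set C := M.toBlocks₂₁ with hCdef
  set D := M.toBlocks₂₂ with hDdef
  have hMb : M = fromBlocks A B C D := (fromBlocks_toBlocks M).symm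
  have hA : A.PosSemidef := by
    have := hM.submatrix Sum.inl
    convert this using 1
    rfl
  have hD : D.PosSemidef := by
    have := hM.submatrix Sum.inr
    convert this using 1
    rfl
  have hC : C = Bᴴ := by
    ext i j
    have := congrFun (congrFun hM.1 (Sum.inr i)) (Sum.inl j)
    simpa [hCdef, hBdef, toBlocks₂₁, toBlocks₁₂, conjTranspose_apply] using this.symm
  by_cases hdet : IsUnit A.det
  · haveI : Invertible A := invertibleOfIsUnitDet A hdet
    have hApd : A.PosDef := posDef_of_psd_isUnit_det hA hdet
    have hSchur : M.det = A.det * (D - C * A⁻¹ * B).det := by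
      rw [hMb, det_fromBlocks₁₁]
      congr 2
      rw [invOf_eq_nonsing_inv]
    have hMfb : (fromBlocks A B Bᴴ D).PosSemidef := by rw [← hC, ← hMb]; exact hM
    have hS : (D - Bᴴ * A⁻¹ * B).PosSemidef :=
      (PosDef.fromBlocks₁₁ B D hApd).mp hMfb
    have hAinv : (A⁻¹).PosSemidef := hA.inv
    have hP : (Bᴴ * A⁻¹ * B).PosSemidef := by
      have := hAinv.conjTranspose_mul_mul_same B
      simpa using this
    have hDle : (D - Bᴴ * A⁻¹ * B).det ≤ D.det := by
      have := det_le_det_add hS hP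
      rwa [sub_add_cancel] at this
    rw [hSchur, hC]
    have hAd : 0 ≤ A.det := psd_det_nonneg hA
    exact mul_le_mul_of_nonneg_left hDle hAd
  · have hAdet0 : A.det = 0 := by
      by_contra h
      exact hdet (isUnit_iff_ne_zero.mpr h)
    obtain ⟨x, hx, hAx⟩ := (Matrix.exists_mulVec_eq_zero_iff).mpr hAdet0
    set v : Fin m ⊕ Fin k → ℝ := Sum.elim x 0 with hvdef
    have hMv : M *ᵥ v = Sum.elim (A *ᵥ x + B *ᵥ 0) (C *ᵥ x + D *ᵥ 0) := by
      rw [hMb, hvdef, fromBlocks_mulVec]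
      congr 1 <;> simp
    have hdp : star v ⬝ᵥ M *ᵥ v = 0 := by
      rw [hMv, hvdef]
      have hstar : star (Sum.elim x (0 : Fin k → ℝ)) = Sum.elim (star x) 0 := by
        ext (i | i) <;> simp
      rw [hstar, sumElim_dotProduct_sumElim, hAx]
      simp
    have hMv0 : M *ᵥ v = 0 := (hM.dotProduct_mulVec_zero_iff v).mp hdp
    have hv0 : v ≠ 0 := by
      intro h
      apply hx
      ext i
      have := congrFun h (Sum.inl i)
      simpa [hvdef] using this
    have hMdet : M.det = 0 := (Matrix.exists_mulVec_eq_zero_iff).mp ⟨v, hv0, hMv0⟩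
    rw [hMdet, hAdet0, zero_mul]
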